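/- For every database DB = D ∪ 𝒞 with denial constraints, every minimal inconsistent subset of DB corresponds to a unique minimal inconsistent subset of the transformed propositional knowledge base K_DB; the correspondence S ↦ {f(t) : t ∈ S ∩ D} ∪ {g(c) : c ∈ S ∩ 𝒞} maps each minimal inconsistent subset of DB to a minimal inconsistent subset of K_DB, but this map need not be injective: there exists a DB with two distinct minimal inconsistent subsets mapped to the same minimal inconsistent subset of K_DB. -/

import Mathlib

def evalDB {α C : Type} (viol : C → Finset (Finset α)) : α ⊕ C → (α → Bool) → Prop
  | Sum.inl t, i => i t = true
  | Sum.inr c, i => ∀ S ∈ viol c, ∃ t ∈ S, i t = false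

def ConsDB {α C : Type} (viol : C → Finset (Finset α)) (X : Finset (α ⊕ C)) : Prop :=
  ∃ i : α → Bool, ∀ x ∈ X, evalDB viol x i

/-- Minimal inconsistent subsets of the database `DB` (tuples and constraints). -/
def MIDB {α C : Type} (viol : C → Finset (Finset α)) (X : Finset (α ⊕ C)) :
    Set (Finset (α ⊕ C)) :=
  {Y | Y ⊆ X ∧ ¬ ConsDB viol Y ∧ ∀ Z ⊂ Y, ConsDB viol Z}

/-- Consistency of a set of propositional formulas (given semantically). -/
def FCons {α : Type} (G : Set ((α → Bool) → Prop)) : Prop :=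
  ∃ i : α → Bool, ∀ φ ∈ G, φ i

/-- Minimal inconsistent subsets of a set of propositional formulas. -/
def MIF {α : Type} (G₀ : Set ((α → Bool) → Prop)) : Set (Set ((α → Bool) → Prop)) :=
  {G | G ⊆ G₀ ∧ ¬ FCons G ∧ ∀ G' ⊂ G, FCons G'}

/-- (a) The correspondence `S ↦ {f(t) : t ∈ S ∩ D} ∪ {g(c) : c ∈ S ∩ 𝒞}`
(here: the image of `S` under the semantic encoding `evalDB`) maps every
minimal inconsistent subset of `DB = D ∪ 𝒞` to a minimal inconsistent subset of
the propositional knowledge base `K_DB`;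
(b) the map need not be injective: some `DB` has two distinct minimal
inconsistent subsets with the same image in `K_DB`. -/
theorem MIDB_to_MIF_and_not_injective :
    (∀ (α C : Type) [DecidableEq α] [DecidableEq C]
      (D : Finset α) (𝒞 : Finset C) (viol : C → Finset (Finset α)),
      ∀ S ∈ MIDB viol (D.image Sum.inl ∪ 𝒞.image Sum.inr),
        evalDB viol '' (S : Set (α ⊕ C)) ∈
          MIF (evalDB viol ''
            ((D.image Sum.inl ∪ 𝒞.image Sum.inr : Finset (α ⊕ C)) : Set (α ⊕ C)))) ∧
    (∃ (D : Finset ℕ) (𝒞 : Finset Bool) (viol : Bool → Finset (Finset ℕ)),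
      (∀ c ∈ 𝒞, ∀ S ∈ viol c, S.Nonempty) ∧
      ∃ S₁ ∈ MIDB viol (D.image Sum.inl ∪ 𝒞.image Sum.inr),
      ∃ S₂ ∈ MIDB viol (D.image Sum.inl ∪ 𝒞.image Sum.inr),
        S₁ ≠ S₂ ∧
        evalDB viol '' (S₁ : Set (ℕ ⊕ Bool)) = evalDB viol '' (S₂ : Set (ℕ ⊕ Bool))) := by
  constructor
  · intro α C _ _ D 𝒞 viol S hS
    obtain ⟨hsub, hinc, hmin⟩ := hS
    refine ⟨Set.image_mono (f := _) (by exact_mod_cast hsub), ?_, ?_⟩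
    · rintro ⟨i, hi⟩
      exact hinc ⟨i, fun x hx => hi (evalDB viol x) ⟨x, hx, rfl⟩⟩
    · intro G' hG'
      classical
      obtain ⟨hG'sub, hne⟩ := hG'
      obtain ⟨φ₀, hφ₀S, hφ₀G'⟩ : ∃ φ₀ ∈ evalDB viol '' (S : Set (α ⊕ C)), φ₀ ∉ G' := by
        by_contra h
        push_neg at h
        exact hne (fun φ hφ => h φ hφ)
      obtain ⟨x₀, hx₀S, hx₀eq⟩ := hφ₀S
      set Z : Finset (α ⊕ C) := S.filter (fun x => evalDB viol x ∈ G') with hZdef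
      have hZsub : Z ⊆ S := Finset.filter_subset _ _
      have hx₀Z : x₀ ∉ Z := by
        intro h
        rw [hZdef, Finset.mem_filter] at h
        exact hφ₀G' (hx₀eq ▸ h.2)
      have hZss : Z ⊂ S := Finset.ssubset_iff_of_subset hZsub |>.mpr ⟨x₀, hx₀S, hx₀Z⟩
      obtain ⟨i, hi⟩ := hmin Z hZss
      refine ⟨i, fun φ hφ => ?_⟩
      obtain ⟨x, hxS, hxeq⟩ := hG'sub hφ
      have hxZ : x ∈ Z := Finset.mem_filter.mpr ⟨hxS, hxeq ▸ hφ⟩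
      exact hxeq ▸ hi x hxZ
  · refine ⟨{0}, {false, true}, fun _ => {{0}}, ?_, ?_⟩
    · intro c _ S hS
      simp only [Finset.mem_singleton] at hS
      subst hS; exact ⟨0, by simp⟩
    · have key : ∀ c : Bool, ({Sum.inl 0, Sum.inr c} : Finset (ℕ ⊕ Bool)) ∈
          MIDB (fun _ => ({{0}} : Finset (Finset ℕ)))
            (({0} : Finset ℕ).image Sum.inl ∪ ({false, true} : Finset Bool).image Sum.inr) := by
        intro c
        refine ⟨?_, ?_, ?_⟩
        · intro x hx
          simp only [Finset.mem_insert, Finset.mem_singleton] at hx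
          rcases hx with rfl | rfl <;> simp
        · rintro ⟨i, hi⟩
          have h1 : i 0 = true := hi (Sum.inl 0) (by simp)
          have h2 := hi (Sum.inr c) (by simp)
          obtain ⟨t, ht, hit⟩ := h2 {0} (by simp)
          simp only [Finset.mem_singleton] at ht
          subst ht
          simp [h1] at hit
        · intro Z hZ
          obtain ⟨hZsub, hZne⟩ := hZ
          by_cases h0 : Sum.inl 0 ∈ Z
          · have hc : Sum.inr c ∉ Z := by
              intro hc
              apply hZne
              intro x hx
              simp only [Finset.mem_insert, Finset.mem_singleton] at hx
              rcases hx with rfl | rfl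
              · exact h0
              · exact hc
            refine ⟨fun _ => true, fun x hx => ?_⟩
            have := hZsub hx
            simp only [Finset.mem_insert, Finset.mem_singleton] at this
            rcases this with rfl | rfl
            · rfl
            · exact absurd hx hc
          · refine ⟨fun _ => false, fun x hx => ?_⟩
            have := hZsub hx
            simp only [Finset.mem_insert, Finset.mem_singleton] at this
            rcases this with rfl | rfl
            · exact absurd hx h0
            · intro T hT
              simp only [Finset.mem_singleton] at hT
              subst hT
              exact ⟨0, by simp⟩
      refine ⟨{Sum.inl 0, Sum.inr false}, key false, {Sum.inl 0, Sum.inr true}, key true, ?_, ?_⟩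
      · intro h
        have : (Sum.inr false : ℕ ⊕ Bool) ∈ ({Sum.inl 0, Sum.inr true} : Finset (ℕ ⊕ Bool)) := by
          rw [← h]; simp
        simp at this
      · simp only [Finset.coe_insert, Finset.coe_singleton, Set.image_insert_eq,
          Set.image_singleton]
        rfl
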